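/- Let d ≥ 1 be an integer, s ∈ (0,1), and let u : ℝ^d → ℝ be measurable with u(x) > 0 for almost every x. Then, as integrals with values in [0, ∞], ∫∫_{ℝ^d × ℝ^d} (u(x) − u(y))(log u(x) − log u(y)) / |x − y|^{d + 2s} dx dy ≥ 4 ∫∫_{ℝ^d × ℝ^d} (√(u(x)) − √(u(y)))² / |x − y|^{d + 2s} dx dy. -/

import Mathlib

open MeasureTheory Real

/-- Key scalar lemma: for `t ≥ 1`, `2(t-1) ≤ (t+1) log t`. -/
lemma key_log (t : ℝ) (ht : 1 ≤ t) : 2 * (t - 1) ≤ (t + 1) * Real.log t := by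
  set f : ℝ → ℝ := fun x => (x + 1) * Real.log x - 2 * (x - 1) with hf
  have hmono : MonotoneOn f (Set.Ici 1) := by
    apply monotoneOn_of_deriv_nonneg (convex_Ici 1)
    · apply ContinuousOn.sub
      · exact (continuousOn_id.add continuousOn_const).mul
          (Real.continuousOn_log.mono (by intro x hx; exact ne_of_gt (lt_of_lt_of_le one_pos hx)))
      · exact (continuousOn_const.mul (continuousOn_id.sub continuousOn_const))
    · intro x hx
      rw [interior_Ici] at hx
      have hx0 : (0:ℝ) < x := lt_trans one_pos hx
      have hder : HasDerivAt f (Real.log x + (x + 1) * (1 / x) - 2) x := by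
        have h1 : HasDerivAt (fun x : ℝ => (x + 1) * Real.log x)
            (1 * Real.log x + (x + 1) * (1 / x)) x := by
          have := (((hasDerivAt_id x).add_const 1)).mul (Real.hasDerivAt_log hx0.ne')
          simpa [one_div, Pi.mul_def] using this
        have h2 : HasDerivAt (fun x : ℝ => 2 * (x - 1)) 2 x := by
          simpa using ((hasDerivAt_id x).sub_const 1).const_mul 2
        simpa [one_mul, hf, Pi.sub_def] using h1.sub h2
      exact hder.differentiableAt.differentiableWithinAt
    · intro x hx
      rw [interior_Ici] at hx
      have hx0 : (0:ℝ) < x := lt_trans one_pos hx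
      have hder : HasDerivAt f (Real.log x + (x + 1) * (1 / x) - 2) x := by
        have h1 : HasDerivAt (fun x : ℝ => (x + 1) * Real.log x)
            (1 * Real.log x + (x + 1) * (1 / x)) x := by
          have := (((hasDerivAt_id x).add_const 1)).mul (Real.hasDerivAt_log hx0.ne')
          simpa [one_div, Pi.mul_def] using this
        have h2 : HasDerivAt (fun x : ℝ => 2 * (x - 1)) 2 x := by
          simpa using ((hasDerivAt_id x).sub_const 1).const_mul 2
        simpa [one_mul, hf, Pi.sub_def] using h1.sub h2
      rw [hder.deriv]
      have hlog : 1 - 1/x ≤ Real.log x := by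
        have h := Real.log_le_sub_one_of_pos (x := 1/x) (by positivity)
        have hx' : Real.log (1/x) = - Real.log x := by
          rw [one_div, Real.log_inv]
        rw [hx'] at h
        linarith
      have : (x + 1) * (1/x) = 1 + 1/x := by field_simp
      rw [this]
      linarith
  have h1 : f 1 ≤ f t := hmono Set.self_mem_Ici ht ht
  simp only [hf, Real.log_one] at h1
  nlinarith [h1]

/-- Pointwise inequality: `4 (√a - √b)² ≤ (a - b)(log a - log b)` for `a, b > 0`. -/
lemma key_pointwise (a b : ℝ) (ha : 0 < a) (hb : 0 < b) :
    4 * (Real.sqrt a - Real.sqrt b) ^ 2 ≤ (a - b) * (Real.log a - Real.log b) := by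
  -- WLOG a ≥ b
  wlog hab : b ≤ a with H
  · have := H b a hb ha (le_of_not_ge hab)
    nlinarith [this]
  -- set t = a / b ≥ 1
  set t : ℝ := a / b with htdef
  have ht1 : 1 ≤ t := (one_le_div hb).mpr hab
  have ht0 : 0 < t := lt_of_lt_of_le one_pos ht1
  have hbt : b * t = a := by
    rw [htdef]; field_simp
  have hsa : Real.sqrt a = Real.sqrt b * Real.sqrt t := by
    rw [← Real.sqrt_mul hb.le, hbt]
  have hlog : Real.log a - Real.log b = Real.log t := by
    rw [htdef, Real.log_div ha.ne' hb.ne']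
  have hsub : a - b = b * (t - 1) := by
    nlinarith [hbt]
  -- key: 4 (√t - 1)² ≤ (t - 1) log t
  have hst1 : 1 ≤ Real.sqrt t := by
    rw [show (1:ℝ) = Real.sqrt 1 by simp]
    exact Real.sqrt_le_sqrt ht1
  have hkey := key_log (Real.sqrt t) hst1
  have hlogsqrt : Real.log (Real.sqrt t) = Real.log t / 2 := Real.log_sqrt ht0.le
  rw [hlogsqrt] at hkey
  have hsq : Real.sqrt t * Real.sqrt t = t := Real.mul_self_sqrt ht0.le
  have hmain : 4 * (Real.sqrt t - 1) ^ 2 ≤ (t - 1) * Real.log t := by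
    -- from hkey : 2(√t - 1) ≤ (√t + 1) * (log t / 2), multiply by (√t - 1) ≥ 0
    have h2 : 0 ≤ Real.sqrt t - 1 := by linarith
    nlinarith [mul_le_mul_of_nonneg_left hkey h2]
  -- scale by b
  rw [hlog, hsub, hsa]
  have hsqb : Real.sqrt b * Real.sqrt b = b := Real.mul_self_sqrt hb.le
  have hsb : 0 ≤ Real.sqrt b := Real.sqrt_nonneg b
  have hfac : (Real.sqrt b * Real.sqrt t - Real.sqrt b) ^ 2 = b * (Real.sqrt t - 1) ^ 2 := by
    have h : Real.sqrt b * Real.sqrt t - Real.sqrt b = Real.sqrt b * (Real.sqrt t - 1) := by ring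
    rw [h, mul_pow, sq (Real.sqrt b), hsqb]
  calc 4 * (Real.sqrt b * Real.sqrt t - Real.sqrt b) ^ 2
      = b * (4 * (Real.sqrt t - 1) ^ 2) := by rw [hfac]; ring
    _ ≤ b * ((t - 1) * Real.log t) := by
        exact mul_le_mul_of_nonneg_left hmain hb.le
    _ = b * (t - 1) * Real.log t := by ring

theorem stmt_2 (d : ℕ) (hd : 1 ≤ d) (s : ℝ) (hs0 : 0 < s) (hs1 : s < 1)
    (u : EuclideanSpace ℝ (Fin d) → ℝ) (hu : Measurable u)
    (hpos : ∀ᵐ x ∂(volume : Measure (EuclideanSpace ℝ (Fin d))), 0 < u x) :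
    4 * ∫⁻ p : EuclideanSpace ℝ (Fin d) × EuclideanSpace ℝ (Fin d),
        ENNReal.ofReal ((Real.sqrt (u p.1) - Real.sqrt (u p.2)) ^ 2 / ‖p.1 - p.2‖ ^ ((d : ℝ) + 2 * s))
      ≤ ∫⁻ p : EuclideanSpace ℝ (Fin d) × EuclideanSpace ℝ (Fin d),
        ENNReal.ofReal ((u p.1 - u p.2) * (Real.log (u p.1) - Real.log (u p.2)) / ‖p.1 - p.2‖ ^ ((d : ℝ) + 2 * s)) := by
  rw [← lintegral_const_mul' _ _ (by norm_num : (4:ENNReal) ≠ ⊤)]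
  have hvol : (volume : Measure (EuclideanSpace ℝ (Fin d) × EuclideanSpace ℝ (Fin d)))
      = (volume : Measure (EuclideanSpace ℝ (Fin d))).prod volume := Measure.volume_eq_prod _ _
  have h1 : ∀ᵐ p : EuclideanSpace ℝ (Fin d) × EuclideanSpace ℝ (Fin d) ∂volume, 0 < u p.1 := by
    rw [hvol]
    exact Measure.quasiMeasurePreserving_fst.ae hpos
  have h2 : ∀ᵐ p : EuclideanSpace ℝ (Fin d) × EuclideanSpace ℝ (Fin d) ∂volume, 0 < u p.2 := by
    rw [hvol]
    exact Measure.quasiMeasurePreserving_snd.ae hpos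
  refine lintegral_mono_ae ?_
  filter_upwards [h1, h2] with p hp1 hp2
  set K : ℝ := ‖p.1 - p.2‖ ^ ((d : ℝ) + 2 * s) with hK
  have hK0 : 0 ≤ K := by
    apply Real.rpow_nonneg (norm_nonneg _)
  have hptwise := key_pointwise (u p.1) (u p.2) hp1 hp2
  calc 4 * ENNReal.ofReal ((Real.sqrt (u p.1) - Real.sqrt (u p.2)) ^ 2 / K)
      = ENNReal.ofReal (4 * ((Real.sqrt (u p.1) - Real.sqrt (u p.2)) ^ 2 / K)) := by
        rw [ENNReal.ofReal_mul (by norm_num)]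
        norm_num
    _ ≤ ENNReal.ofReal ((u p.1 - u p.2) * (Real.log (u p.1) - Real.log (u p.2)) / K) := by
        apply ENNReal.ofReal_le_ofReal
        rw [mul_div_assoc']
        rcases hK0.eq_or_lt with h | h
        · rw [← h, div_zero, div_zero]
        · exact div_le_div_of_nonneg_right hptwise h.le
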